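/- Let H_{|∇|}(f,g) := |∇|(fg) − f|∇|g − (|∇|f)g, where |∇| acts componentwise, and extend to ℝ³-valued maps with f replaced by a ∧_L (Lorentzian cross product in the first slot). Then for ℝ³-valued Schwartz maps a, b, c one has the integration-by-parts identity ∫_{ℝᵈ} ⟨H_{|∇|}(a ∧_L, b), c⟩_L dx = ∫_{ℝᵈ} ⟨H_{|∇|}(a ∧_L, c), b⟩_L dx + 2 ∫_{ℝᵈ} ⟨(|∇|a) ∧_L c, b⟩_L dx. -/

import Mathlib

open MeasureTheory

/-- The Lorentzian inner product on ℝ³: ⟨a,b⟩_L = −a₀b₀ + a₁b₁ + a₂b₂. -/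
def lorentzInner (a b : Fin 3 → ℝ) : ℝ := -(a 0 * b 0) + a 1 * b 1 + a 2 * b 2

/-- The Lorentzian cross product: a ∧_L b = diag(−1,1,1)(a ∧ b). -/
def lorentzCross (a b : Fin 3 → ℝ) : Fin 3 → ℝ :=
  fun i => (if i = 0 then (-1 : ℝ) else 1) * (crossProduct a b) i

/-- The half-Laplacian `|∇| f = 𝓕⁻¹(|ξ| 𝓕 f)` of a real-valued function on `ℝᵈ`. -/
noncomputable def halfLap {d : ℕ} (f : EuclideanSpace ℝ (Fin d) → ℝ) :
    EuclideanSpace ℝ (Fin d) → ℝ :=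
  fun x => (FourierTransformInv.fourierInv
    (fun ξ => ((‖ξ‖ : ℝ) : ℂ) * FourierTransform.fourier (fun y => ((f y : ℝ) : ℂ)) ξ) x).re

/-- `|∇|` acting componentwise on an ℝ³-valued map. -/
noncomputable def vecHalfLap {d : ℕ} (u : EuclideanSpace ℝ (Fin d) → Fin 3 → ℝ) :
    EuclideanSpace ℝ (Fin d) → Fin 3 → ℝ :=
  fun x i => halfLap (fun y => u y i) x

/-- The Leibniz defect of `|∇|` with a Lorentzian cross product in the first slot:
`H_{|∇|}(a ∧_L, b) := |∇|(a ∧_L b) − (|∇|a) ∧_L b − a ∧_L (|∇|b)`. -/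
noncomputable def crossLeibnizDefect {d : ℕ}
    (a b : EuclideanSpace ℝ (Fin d) → Fin 3 → ℝ) :
    EuclideanSpace ℝ (Fin d) → Fin 3 → ℝ :=
  fun x => vecHalfLap (fun y => lorentzCross (a y) (b y)) x
    - lorentzCross (vecHalfLap a x) (b x) - lorentzCross (a x) (vecHalfLap b x)


open MeasureTheory FourierTransform SchwartzMap ContinuousLinearMap

noncomputable section Aux14

variable {d : ℕ}

local notation "𝓥" => EuclideanSpace ℝ (Fin d)

lemma schwartz_temperate {E F : Type*} [NormedAddCommGroup E] [NormedSpace ℝ E]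
    [NormedAddCommGroup F] [NormedSpace ℝ F] (f : 𝓢(E, F)) :
    Function.HasTemperateGrowth ⇑f := by
  refine ⟨f.smooth', fun n => ?_⟩
  obtain ⟨C, hC⟩ := f.decay 0 n
  exact ⟨0, C, fun x => by simpa using hC.2 x⟩

/-- product of Schwartz functions as a Schwartz function -/
def mulS {E : Type*} [NormedAddCommGroup E] [NormedSpace ℝ E]
    (f g : 𝓢(E, ℝ)) : 𝓢(E, ℝ) :=
  bilinLeftCLM (ContinuousLinearMap.mul ℝ ℝ) (schwartz_temperate g) f

@[simp] lemma mulS_apply {E : Type*} [NormedAddCommGroup E] [NormedSpace ℝ E]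
    (f g : 𝓢(E, ℝ)) (x : E) : mulS f g x = f x * g x := rfl

/-- complexification of a real Schwartz function -/
def cplx {E : Type*} [NormedAddCommGroup E] [NormedSpace ℝ E]
    (f : 𝓢(E, ℝ)) : 𝓢(E, ℂ) :=
  bilinLeftCLM (ContinuousLinearMap.lsmul ℝ ℝ : ℝ →L[ℝ] ℂ →L[ℝ] ℂ)
    (Function.HasTemperateGrowth.const (1 : ℂ)) f

@[simp] lemma cplx_apply {E : Type*} [NormedAddCommGroup E] [NormedSpace ℝ E]
    (f : 𝓢(E, ℝ)) (x : E) : cplx f x = (f x : ℂ) := by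
  show (f x) • (1 : ℂ) = (f x : ℂ)
  simp [Complex.real_smul]

end Aux14
section Four
variable {d : ℕ}
local notation "𝓥" => EuclideanSpace ℝ (Fin d)

lemma mult_inv {h g : (EuclideanSpace ℝ (Fin d)) → ℂ} (hh : Integrable h) (hg : Integrable g) :
    ∫ ξ, FourierTransformInv.fourierInv h ξ * g ξ = ∫ x, h x * FourierTransformInv.fourierInv g x := by
  have hL : Continuous fun p : 𝓥 × 𝓥 => (-(innerₗ 𝓥)) p.1 p.2 := by
    exact (continuous_inner (𝕜 := ℝ) (E := EuclideanSpace ℝ (Fin d))).neg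
  have hflip : (-(innerₗ 𝓥)).flip = -(innerₗ 𝓥) := by
    apply LinearMap.ext; intro x; apply LinearMap.ext; intro y
    simp [real_inner_comm, mul_comm]
  have h2 := VectorFourier.integral_fourierIntegral_smul_eq_flip (F := ℂ)
    (L := -(innerₗ 𝓥)) (μ := volume) (ν := volume)
    Real.continuous_fourierChar hL hh hg
  rw [hflip] at h2
  show ∫ ξ, VectorFourier.fourierIntegral Real.fourierChar volume (-innerₗ 𝓥) h ξ * g ξ
    = ∫ x, h x * VectorFourier.fourierIntegral Real.fourierChar volume (-innerₗ 𝓥) g x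
  simpa [smul_eq_mul] using h2

lemma integrable_norm_smul (G : 𝓢(EuclideanSpace ℝ (Fin d), ℂ)) :
    Integrable (fun ξ : 𝓥 => (‖ξ‖ : ℂ) * G ξ) := by
  have h := G.integrable_pow_mul (μ := volume) 1
  refine h.mono' ?_ ?_
  · exact ((Complex.continuous_ofReal.comp continuous_norm).mul G.continuous).aestronglyMeasurable
  · filter_upwards with ξ
    simp

lemma halfLap_eq (f : 𝓢(EuclideanSpace ℝ (Fin d), ℝ)) :
    halfLap ⇑f = fun x => (FourierTransformInv.fourierInv
      (fun ξ => (‖ξ‖ : ℂ) * FourierTransform.fourier ⇑(cplx f) ξ) x).re := by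
  have h1 : (fun y : 𝓥 => ((f y : ℝ) : ℂ)) = ⇑(cplx f) := by funext y; simp
  unfold halfLap
  rw [h1]

lemma integrable_norm_smul' (f : 𝓢(EuclideanSpace ℝ (Fin d), ℝ)) :
    Integrable (fun ξ : 𝓥 => (‖ξ‖ : ℂ) * FourierTransform.fourier ⇑(cplx f) ξ) := by
  simpa [fourierTransformCLM_apply, SchwartzMap.fourier_coe] using integrable_norm_smul (fourierTransformCLM ℂ (cplx f))

lemma halfLap_continuous (f : 𝓢(EuclideanSpace ℝ (Fin d), ℝ)) : Continuous (halfLap ⇑f) := by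
  rw [halfLap_eq]
  have hL : Continuous fun p : 𝓥 × 𝓥 => (-(innerₗ 𝓥)) p.1 p.2 := by
    exact (continuous_inner (𝕜 := ℝ) (E := EuclideanSpace ℝ (Fin d))).neg
  exact Complex.continuous_re.comp (VectorFourier.fourierIntegral_continuous
    Real.continuous_fourierChar hL (integrable_norm_smul' f))

lemma halfLap_bound (f : 𝓢(EuclideanSpace ℝ (Fin d), ℝ)) :
    ∃ C, ∀ x, ‖halfLap ⇑f x‖ ≤ C := by
  refine ⟨∫ ξ, ‖(‖ξ‖ : ℂ) * FourierTransform.fourier ⇑(cplx f) ξ‖, fun x => ?_⟩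
  rw [halfLap_eq]
  refine le_trans (Complex.abs_re_le_norm _) ?_
  exact VectorFourier.norm_fourierIntegral_le_integral_norm _ _ _ _ _

lemma integrable_halfLap_mul (f g : 𝓢(EuclideanSpace ℝ (Fin d), ℝ)) :
    Integrable (fun x : 𝓥 => halfLap ⇑f x * g x) := by
  obtain ⟨C, hC⟩ := halfLap_bound f
  exact g.integrable.bdd_mul (halfLap_continuous f).aestronglyMeasurable
    (Filter.Eventually.of_forall hC)

lemma halfLap_key (f g : 𝓢(EuclideanSpace ℝ (Fin d), ℝ)) :
    ∫ x, halfLap ⇑f x * g x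
      = (∫ ξ, (‖ξ‖ : ℂ) * FourierTransform.fourier ⇑(cplx f) ξ
          * FourierTransformInv.fourierInv ⇑(cplx g) ξ).re := by
  have hmm : ∀ ξ : 𝓥, (‖ξ‖ : ℂ) * FourierTransform.fourier ⇑(cplx f) ξ
        * FourierTransformInv.fourierInv ⇑(cplx g) ξ
      = ((‖ξ‖ : ℂ) * FourierTransform.fourier ⇑(cplx f) ξ)
        * FourierTransformInv.fourierInv ⇑(cplx g) ξ := fun _ => rfl
  set q : 𝓥 → ℂ := fun ξ => (‖ξ‖ : ℂ) * FourierTransform.fourier ⇑(cplx f) ξ with hqdef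
  have hq : Integrable q := integrable_norm_smul' f
  have hL : Continuous fun p : 𝓥 × 𝓥 => (-(innerₗ 𝓥)) p.1 p.2 := by
    exact (continuous_inner (𝕜 := ℝ) (E := EuclideanSpace ℝ (Fin d))).neg
  have hcont : Continuous (FourierTransformInv.fourierInv q) :=
    VectorFourier.fourierIntegral_continuous Real.continuous_fourierChar hL hq
  have hbdd : ∃ C, ∀ x, ‖FourierTransformInv.fourierInv q x‖ ≤ C :=
    ⟨∫ ξ, ‖q ξ‖, fun x => VectorFourier.norm_fourierIntegral_le_integral_norm _ _ _ _ _⟩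
  have hint : Integrable (fun x : 𝓥 => FourierTransformInv.fourierInv q x * (cplx g) x) :=
    (cplx g).integrable.bdd_mul hcont.aestronglyMeasurable
      (Filter.Eventually.of_forall hbdd.choose_spec)
  calc ∫ x, halfLap ⇑f x * g x
      = ∫ x, (FourierTransformInv.fourierInv q x * (cplx g) x).re := by
        rw [halfLap_eq]
        refine integral_congr_ae (Filter.Eventually.of_forall fun x => ?_)
        simp [Complex.mul_re]
        exact Or.inl rfl
    _ = (∫ x, FourierTransformInv.fourierInv q x * (cplx g) x).re := by
        rw [← RCLike.re_to_complex]
        rw [← integral_re hint]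
        simp
    _ = (∫ ξ, q ξ * FourierTransformInv.fourierInv ⇑(cplx g) ξ).re := by
        rw [mult_inv hq (cplx g).integrable]


lemma halfLap_symm (f g : 𝓢(EuclideanSpace ℝ (Fin d), ℝ)) :
    ∫ x, halfLap ⇑f x * g x = ∫ x, halfLap ⇑g x * f x := by
  rw [halfLap_key, halfLap_key]
  congr 1
  rw [← MeasureTheory.integral_neg_eq_self (fun ξ : 𝓥 => (‖ξ‖ : ℂ)
      * FourierTransform.fourier ⇑(cplx g) ξ * FourierTransformInv.fourierInv ⇑(cplx f) ξ) volume]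
  apply integral_congr_ae; filter_upwards with ξ
  rw [Real.fourierInv_eq_fourier_neg, Real.fourierInv_eq_fourier_neg]
  simp only [norm_neg, neg_neg]
  ring

lemma halfLap_selfadj (f g : 𝓢(EuclideanSpace ℝ (Fin d), ℝ)) :
    ∫ x, halfLap ⇑f x * g x = ∫ x, f x * halfLap ⇑g x := by
  rw [halfLap_symm]
  apply integral_congr_ae; filter_upwards with x; ring

lemma LI_cross_rot (u v w : Fin 3 → ℝ) :
    lorentzInner (lorentzCross u v) w = lorentzInner u (lorentzCross v w) := by
  simp [lorentzInner, lorentzCross, cross_apply]; ring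

lemma LI_cross_swap (u v w : Fin 3 → ℝ) :
    lorentzInner (lorentzCross u v) w = -lorentzInner (lorentzCross u w) v := by
  simp [lorentzInner, lorentzCross, cross_apply]; ring

lemma LI_cross_neg (u v w : Fin 3 → ℝ) :
    lorentzInner u (lorentzCross v w) = -lorentzInner u (lorentzCross w v) := by
  simp [lorentzInner, lorentzCross, cross_apply]; ring

lemma LI_sub_sub (u v w q : Fin 3 → ℝ) :
    lorentzInner (u - v - w) q = lorentzInner u q - lorentzInner v q - lorentzInner w q := by
  simp [lorentzInner, Pi.sub_apply]; ring

lemma CS_cross {u v : EuclideanSpace ℝ (Fin d) → Fin 3 → ℝ}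
    (hu : ∀ i, ∃ F : 𝓢(EuclideanSpace ℝ (Fin d), ℝ), (fun x => u x i) = ⇑F)
    (hv : ∀ i, ∃ F : 𝓢(EuclideanSpace ℝ (Fin d), ℝ), (fun x => v x i) = ⇑F) :
    ∀ i, ∃ F : 𝓢(EuclideanSpace ℝ (Fin d), ℝ),
      (fun x => lorentzCross (u x) (v x) i) = ⇑F := by
  choose U hU using hu
  choose W hW using hv
  have hux : ∀ x j, u x j = U j x := fun x j => congrFun (hU j) x
  have hvx : ∀ x j, v x j = W j x := fun x j => congrFun (hW j) x
  intro i
  fin_cases i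
  · exact ⟨mulS (U 2) (W 1) - mulS (U 1) (W 2), by
      funext x; simp [lorentzCross, cross_apply, hux, hvx]⟩
  · exact ⟨mulS (U 2) (W 0) - mulS (U 0) (W 2), by
      funext x; simp [lorentzCross, cross_apply, hux, hvx]⟩
  · exact ⟨mulS (U 0) (W 1) - mulS (U 1) (W 0), by
      funext x; simp [lorentzCross, cross_apply, hux, hvx]⟩

lemma repr_LI_left {u q : EuclideanSpace ℝ (Fin d) → Fin 3 → ℝ}
    (U Q : Fin 3 → 𝓢(EuclideanSpace ℝ (Fin d), ℝ))
    (hU : ∀ i, (fun x => u x i) = ⇑(U i)) (hQ : ∀ i, (fun x => q x i) = ⇑(Q i)) :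
    (fun x => lorentzInner (vecHalfLap u x) (q x))
      = fun x => -(halfLap ⇑(U 0) x * Q 0 x) + halfLap ⇑(U 1) x * Q 1 x
          + halfLap ⇑(U 2) x * Q 2 x := by
  funext x
  have h1 : ∀ i, vecHalfLap u x i = halfLap ⇑(U i) x := fun i => by
    simp only [vecHalfLap]; rw [hU i]
  have h2 : ∀ i, q x i = Q i x := fun i => congrFun (hQ i) x
  simp [lorentzInner, h1, h2]

lemma repr_LI_right {u q : EuclideanSpace ℝ (Fin d) → Fin 3 → ℝ}
    (U Q : Fin 3 → 𝓢(EuclideanSpace ℝ (Fin d), ℝ))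
    (hU : ∀ i, (fun x => u x i) = ⇑(U i)) (hQ : ∀ i, (fun x => q x i) = ⇑(Q i)) :
    (fun x => lorentzInner (u x) (vecHalfLap q x))
      = fun x => -(halfLap ⇑(Q 0) x * U 0 x) + halfLap ⇑(Q 1) x * U 1 x
          + halfLap ⇑(Q 2) x * U 2 x := by
  funext x
  have h1 : ∀ i, vecHalfLap q x i = halfLap ⇑(Q i) x := fun i => by
    simp only [vecHalfLap]; rw [hQ i]
  have h2 : ∀ i, u x i = U i x := fun i => congrFun (hU i) x
  simp [lorentzInner, h1, h2]; ring

lemma integrable_LI_halfLap_left {u q : EuclideanSpace ℝ (Fin d) → Fin 3 → ℝ}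
    (hu : ∀ i, ∃ F : 𝓢(EuclideanSpace ℝ (Fin d), ℝ), (fun x => u x i) = ⇑F)
    (hq : ∀ i, ∃ F : 𝓢(EuclideanSpace ℝ (Fin d), ℝ), (fun x => q x i) = ⇑F) :
    Integrable (fun x => lorentzInner (vecHalfLap u x) (q x)) := by
  choose U hU using hu
  choose Q hQ using hq
  rw [repr_LI_left U Q hU hQ]
  exact (((integrable_halfLap_mul (U 0) (Q 0)).neg).add
    (integrable_halfLap_mul (U 1) (Q 1))).add (integrable_halfLap_mul (U 2) (Q 2))

lemma integrable_LI_halfLap_right {u q : EuclideanSpace ℝ (Fin d) → Fin 3 → ℝ}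
    (hu : ∀ i, ∃ F : 𝓢(EuclideanSpace ℝ (Fin d), ℝ), (fun x => u x i) = ⇑F)
    (hq : ∀ i, ∃ F : 𝓢(EuclideanSpace ℝ (Fin d), ℝ), (fun x => q x i) = ⇑F) :
    Integrable (fun x => lorentzInner (u x) (vecHalfLap q x)) := by
  choose U hU using hu
  choose Q hQ using hq
  rw [repr_LI_right U Q hU hQ]
  exact (((integrable_halfLap_mul (Q 0) (U 0)).neg).add
    (integrable_halfLap_mul (Q 1) (U 1))).add (integrable_halfLap_mul (Q 2) (U 2))

lemma split3 {f g h : EuclideanSpace ℝ (Fin d) → ℝ} (hf : Integrable f)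
    (hg : Integrable g) (hh : Integrable h) :
    ∫ x, (-(f x) + g x + h x) = -(∫ x, f x) + (∫ x, g x) + ∫ x, h x := by
  have h1 : Integrable (fun x : EuclideanSpace ℝ (Fin d) => -(f x) + g x) := hf.neg.add hg
  rw [integral_add h1 hh, integral_add (f := fun x => -(f x)) hf.neg hg, integral_neg]

lemma flip_LI {u q : EuclideanSpace ℝ (Fin d) → Fin 3 → ℝ}
    (hu : ∀ i, ∃ F : 𝓢(EuclideanSpace ℝ (Fin d), ℝ), (fun x => u x i) = ⇑F)
    (hq : ∀ i, ∃ F : 𝓢(EuclideanSpace ℝ (Fin d), ℝ), (fun x => q x i) = ⇑F) :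
    ∫ x, lorentzInner (vecHalfLap u x) (q x) = ∫ x, lorentzInner (u x) (vecHalfLap q x) := by
  choose U hU using hu
  choose Q hQ using hq
  rw [repr_LI_left U Q hU hQ, repr_LI_right U Q hU hQ]
  rw [split3 (integrable_halfLap_mul (U 0) (Q 0)) (integrable_halfLap_mul (U 1) (Q 1))
    (integrable_halfLap_mul (U 2) (Q 2)),
    split3 (integrable_halfLap_mul (Q 0) (U 0)) (integrable_halfLap_mul (Q 1) (U 1))
    (integrable_halfLap_mul (Q 2) (U 2)),
    halfLap_symm (U 0) (Q 0), halfLap_symm (U 1) (Q 1), halfLap_symm (U 2) (Q 2)]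

lemma KEY {a b c : EuclideanSpace ℝ (Fin d) → Fin 3 → ℝ}
    (ha : ∀ i, ∃ F : 𝓢(EuclideanSpace ℝ (Fin d), ℝ), (fun x => a x i) = ⇑F)
    (hb : ∀ i, ∃ F : 𝓢(EuclideanSpace ℝ (Fin d), ℝ), (fun x => b x i) = ⇑F)
    (hc : ∀ i, ∃ F : 𝓢(EuclideanSpace ℝ (Fin d), ℝ), (fun x => c x i) = ⇑F) :
    ∫ x, lorentzInner (crossLeibnizDefect a b x) (c x)
      = (∫ x, lorentzInner (lorentzCross (a x) (b x)) (vecHalfLap c x))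
        - (∫ x, lorentzInner (vecHalfLap a x) (lorentzCross (b x) (c x)))
        + ∫ x, lorentzInner (lorentzCross (a x) (c x)) (vecHalfLap b x) := by
  have e1 : (fun x => lorentzInner (crossLeibnizDefect a b x) (c x))
      = fun x => lorentzInner (vecHalfLap (fun y => lorentzCross (a y) (b y)) x) (c x)
          - lorentzInner (vecHalfLap a x) (lorentzCross (b x) (c x))
          + lorentzInner (lorentzCross (a x) (c x)) (vecHalfLap b x) := by
    funext x
    have : crossLeibnizDefect a b x
        = vecHalfLap (fun y => lorentzCross (a y) (b y)) x
          - lorentzCross (vecHalfLap a x) (b x) - lorentzCross (a x) (vecHalfLap b x) := rfl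
    rw [this, LI_sub_sub, LI_cross_rot (vecHalfLap a x),
      LI_cross_swap (a x) (vecHalfLap b x) (c x)]
    ring
  have i1 : Integrable (fun x =>
      lorentzInner (vecHalfLap (fun y => lorentzCross (a y) (b y)) x) (c x)) :=
    integrable_LI_halfLap_left (CS_cross ha hb) hc
  have i2 : Integrable (fun x => lorentzInner (vecHalfLap a x) (lorentzCross (b x) (c x))) :=
    integrable_LI_halfLap_left ha (CS_cross hb hc)
  have i3 : Integrable (fun x => lorentzInner (lorentzCross (a x) (c x)) (vecHalfLap b x)) :=
    integrable_LI_halfLap_right (CS_cross ha hc) hb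
  rw [e1, integral_add
      (f := fun x => lorentzInner (vecHalfLap (fun y => lorentzCross (a y) (b y)) x) (c x)
        - lorentzInner (vecHalfLap a x) (lorentzCross (b x) (c x))) (i1.sub i2) i3,
    integral_sub i1 i2, flip_LI (CS_cross ha hb) hc]

end Four

/-- Integration-by-parts identity for the cross-product Leibniz defect. -/
theorem stmt14 {d : ℕ} (hd : 1 ≤ d)
    (a b c : EuclideanSpace ℝ (Fin d) → Fin 3 → ℝ)
    (ha : ∀ i, ∃ F : SchwartzMap (EuclideanSpace ℝ (Fin d)) ℝ, (fun x => a x i) = ⇑F)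
    (hb : ∀ i, ∃ F : SchwartzMap (EuclideanSpace ℝ (Fin d)) ℝ, (fun x => b x i) = ⇑F)
    (hc : ∀ i, ∃ F : SchwartzMap (EuclideanSpace ℝ (Fin d)) ℝ, (fun x => c x i) = ⇑F) :
    (∫ x, lorentzInner (crossLeibnizDefect a b x) (c x))
      = (∫ x, lorentzInner (crossLeibnizDefect a c x) (b x))
        + 2 * ∫ x, lorentzInner (lorentzCross (vecHalfLap a x) (c x)) (b x) := by
  rw [KEY ha hb hc, KEY ha hc hb]
  have e3 : ∫ x, lorentzInner (lorentzCross (vecHalfLap a x) (c x)) (b x)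
      = ∫ x, lorentzInner (vecHalfLap a x) (lorentzCross (c x) (b x)) := by
    apply integral_congr_ae; filter_upwards with x
    exact LI_cross_rot _ _ _
  have e2 : ∫ x, lorentzInner (vecHalfLap a x) (lorentzCross (c x) (b x))
      = - ∫ x, lorentzInner (vecHalfLap a x) (lorentzCross (b x) (c x)) := by
    rw [← integral_neg]
    apply integral_congr_ae; filter_upwards with x
    rw [LI_cross_neg]
  have e4 : ∫ x, lorentzInner (lorentzCross (a x) (b x)) (vecHalfLap c x)
      = ∫ x, lorentzInner (lorentzCross (a x) (b x)) (vecHalfLap c x) := rfl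
  rw [e3, e2]
  ring
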